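/- (Local graph-coordinate regularization.) Let D ⊆ ℝ² be open and f : D → ℝ³ a regular C^{1M} immersion in asymptotic Chebyshev coordinates: ‖f_x‖ ≡ 1, ‖f_y‖ ≡ 1, cos θ = ⟨f_x, f_y⟩ with θ : D → (0,π) continuous, N := (f_x × f_y)/sin θ is C^{1M}, N_xy = N_yx = (cos θ)·N, f_x = N × N_x and f_y = −N × N_y. Then for every p ∈ D there exist open sets U ⊆ D with p ∈ U and V ⊆ ℝ², and a C¹ diffeomorphism S : V → U, such that f ∘ S : V → ℝ³ is C² (a twice continuously differentiable regular immersion). -/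

import Mathlib

noncomputable section

open Real Set

abbrev E3 : Type := EuclideanSpace ℝ (Fin 3)

/-- Partial derivative in the `x`-direction. -/
noncomputable def pdx {E : Type*} [NormedAddCommGroup E] [NormedSpace ℝ E]
    (f : ℝ × ℝ → E) (p : ℝ × ℝ) : E := lineDeriv ℝ f p ((1 : ℝ), (0 : ℝ))

/-- Partial derivative in the `y`-direction. -/
noncomputable def pdy {E : Type*} [NormedAddCommGroup E] [NormedSpace ℝ E]
    (f : ℝ × ℝ → E) (p : ℝ × ℝ) : E := lineDeriv ℝ f p ((0 : ℝ), (1 : ℝ))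

/-- `f` is C¹ on `D`, and the mixed second partials `∂y∂x f` and `∂x∂y f`
exist at every point of `D`, are continuous on `D`, and agree on `D`. -/
def C1M {E : Type*} [NormedAddCommGroup E] [NormedSpace ℝ E]
    (D : Set (ℝ × ℝ)) (f : ℝ × ℝ → E) : Prop :=
  ContDiffOn ℝ 1 f D ∧
  (∀ p ∈ D, LineDifferentiableAt ℝ (pdx f) p ((0 : ℝ), (1 : ℝ))) ∧
  (∀ p ∈ D, LineDifferentiableAt ℝ (pdy f) p ((1 : ℝ), (0 : ℝ))) ∧
  ContinuousOn (pdy (pdx f)) D ∧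
  ContinuousOn (pdx (pdy f)) D ∧
  (∀ p ∈ D, pdy (pdx f) p = pdx (pdy f) p)

/-- The cross product on ℝ³. -/
noncomputable def cross3 (a b : E3) : E3 :=
  (WithLp.equiv 2 (Fin 3 → ℝ)).symm
    ![a 1 * b 2 - a 2 * b 1, a 2 * b 0 - a 0 * b 2, a 0 * b 1 - a 1 * b 0]

/-- The Euclidean inner product on ℝ³. -/
noncomputable def dot (a b : E3) : ℝ := inner ℝ a b

/-- `N : D → S²` is weakly harmonic: it is C^{1M}, weakly regular, takes values in the
unit sphere, and `N_xy = N_yx = h • N` for some scalar function `h`. -/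
def WeakHarmonic (D : Set (ℝ × ℝ)) (N : ℝ × ℝ → E3) : Prop :=
  C1M D N ∧ (∀ p ∈ D, ‖N p‖ = 1) ∧
  (∀ p ∈ D, pdx N p ≠ 0 ∧ pdy N p ≠ 0) ∧
  ∃ h : ℝ × ℝ → ℝ, ∀ p ∈ D, pdy (pdx N) p = h p • N p ∧ pdx (pdy N) p = h p • N p

/-- A weakly-regular C^{1M} ps-front with associated weakly harmonic map `N`. -/
def PsFront (D : Set (ℝ × ℝ)) (f N : ℝ × ℝ → E3) : Prop :=
  C1M D f ∧ (∀ p ∈ D, pdx f p ≠ 0 ∧ pdy f p ≠ 0) ∧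
  WeakHarmonic D N ∧
  ∀ p ∈ D, pdx f p = cross3 (N p) (pdx N p) ∧ pdy f p = -cross3 (N p) (pdy N p)


section AuxLemmas

lemma dot_expand (a b : E3) : dot a b = a 0 * b 0 + a 1 * b 1 + a 2 * b 2 := by
  simp [dot, PiLp.inner_apply, RCLike.inner_apply, Fin.sum_univ_three, mul_comm]

lemma dot_comm' (a b : E3) : dot a b = dot b a := by simp [dot_expand]; ring

lemma dot_cross_left (a b : E3) : dot a (cross3 a b) = 0 := by
  simp [dot_expand, cross3]; ring

lemma dot_cross_right (a b : E3) : dot b (cross3 a b) = 0 := by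
  simp [dot_expand, cross3]; ring

lemma cross_norm' (a b : E3) :
    dot (cross3 a b) (cross3 a b) = dot a a * dot b b - dot a b ^ 2 := by
  simp [dot_expand, cross3]; ring

lemma gram_decomp (a b w : E3) :
    (dot a a * dot b b - dot a b ^ 2) • w =
      (dot b b * dot a w - dot a b * dot b w) • a +
      (dot a a * dot b w - dot a b * dot a w) • b +
      dot w (cross3 a b) • cross3 a b := by
  ext i
  fin_cases i <;>
    simp [dot_expand, cross3, PiLp.smul_apply, PiLp.add_apply, smul_eq_mul] <;> ring

lemma dot_smul_left' (r : ℝ) (a b : E3) : dot (r • a) b = r * dot a b := by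
  simp [dot_expand, PiLp.smul_apply, smul_eq_mul]; ring
lemma dot_smul_right' (r : ℝ) (a b : E3) : dot a (r • b) = r * dot a b := by
  simp [dot_expand, PiLp.smul_apply, smul_eq_mul]; ring
lemma dot_add_right' (a b c : E3) : dot a (b + c) = dot a b + dot a c := by
  simp [dot_expand, PiLp.add_apply]; ring
lemma dot_self_norm' (a : E3) : dot a a = ‖a‖ ^ 2 := real_inner_self_eq_norm_sq a
lemma dot_neg_right' (a b : E3) : dot a (-b) = - dot a b := by simp [dot]

/-- the 2x2 continuous linear map with matrix entries a b / d e -/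
noncomputable def mk2 (a b d e : ℝ) : (ℝ × ℝ) →L[ℝ] (ℝ × ℝ) :=
  ((a • ContinuousLinearMap.fst ℝ ℝ ℝ + b • ContinuousLinearMap.snd ℝ ℝ ℝ)).prod
    ((d • ContinuousLinearMap.fst ℝ ℝ ℝ + e • ContinuousLinearMap.snd ℝ ℝ ℝ))

@[simp] lemma mk2_apply (a b d e : ℝ) (w : ℝ × ℝ) :
    mk2 a b d e w = (a * w.1 + b * w.2, d * w.1 + e * w.2) := by
  simp [mk2, smul_eq_mul]

end AuxLemmas

set_option maxHeartbeats 2000000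

/-- Local graph-coordinate regularization: a regular C^{1M} immersion in asymptotic
Chebyshev coordinates with `K = −1` is, locally around every point, a C¹
reparametrization of a C² regular immersion. -/
theorem stmt_13 (D : Set (ℝ × ℝ)) (hD : IsOpen D)
    (f N : ℝ × ℝ → E3) (θ : ℝ × ℝ → ℝ)
    (hf : C1M D f)
    (hreg : ∀ p ∈ D, LinearIndependent ℝ ![pdx f p, pdy f p])
    (hE : ∀ p ∈ D, ‖pdx f p‖ = 1) (hG : ∀ p ∈ D, ‖pdy f p‖ = 1)
    (hθc : ContinuousOn θ D) (hθr : ∀ p ∈ D, θ p ∈ Set.Ioo 0 π)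
    (hcos : ∀ p ∈ D, Real.cos (θ p) = dot (pdx f p) (pdy f p))
    (hNdef : ∀ p ∈ D, N p = (Real.sin (θ p))⁻¹ • cross3 (pdx f p) (pdy f p))
    (hN : C1M D N)
    (hNxy : ∀ p ∈ D, pdy (pdx N) p = Real.cos (θ p) • N p ∧
      pdx (pdy N) p = Real.cos (θ p) • N p)
    (hfxN : ∀ p ∈ D, pdx f p = cross3 (N p) (pdx N p))
    (hfyN : ∀ p ∈ D, pdy f p = -cross3 (N p) (pdy N p)) :
    ∀ p ∈ D, ∃ (U V : Set (ℝ × ℝ)) (S Sinv : ℝ × ℝ → ℝ × ℝ),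
      IsOpen U ∧ p ∈ U ∧ U ⊆ D ∧ IsOpen V ∧
      Set.BijOn S V U ∧ ContDiffOn ℝ 1 S V ∧ ContDiffOn ℝ 1 Sinv U ∧
      (∀ q ∈ V, Sinv (S q) = q) ∧ (∀ q ∈ U, S (Sinv q) = q) ∧
      ContDiffOn ℝ 2 (f ∘ S) V ∧
      (∀ q ∈ V, LinearIndependent ℝ ![pdx (f ∘ S) q, pdy (f ∘ S) q]) := by
  intro p hp
  classical
  -- basic differentiability facts
  have hfd : ∀ q ∈ D, DifferentiableAt ℝ f q := fun q hq =>
    (hf.1.contDiffAt (hD.mem_nhds hq)).differentiableAt one_ne_zero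
  have hfderiv : ∀ q ∈ D, ∀ w : ℝ × ℝ,
      fderiv ℝ f q w = w.1 • pdx f q + w.2 • pdy f q := by
    intro q hq w
    rw [show pdx f q = fderiv ℝ f q ((1:ℝ),(0:ℝ)) from (hfd q hq).lineDeriv_eq_fderiv,
        show pdy f q = fderiv ℝ f q ((0:ℝ),(1:ℝ)) from (hfd q hq).lineDeriv_eq_fderiv]
    have hw : w = w.1 • ((1:ℝ),(0:ℝ)) + w.2 • ((0:ℝ),(1:ℝ)) := by ext <;> simp
    conv_lhs => rw [hw]
    rw [map_add, map_smul, map_smul]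
  -- N is orthogonal to the partials of f
  have hNfx : ∀ q ∈ D, dot (N q) (pdx f q) = 0 := by
    intro q hq; rw [(hfxN q hq)]; exact dot_cross_left _ _
  have hNfy : ∀ q ∈ D, dot (N q) (pdy f q) = 0 := by
    intro q hq; rw [(hfyN q hq), dot_neg_right']
    simp [dot_cross_left]
  -- constants at the base point
  set A : E3 := pdx f p with hAdef
  set B : E3 := pdy f p with hBdef
  set c : ℝ := Real.cos (θ p) with hcdef
  have hA1 : dot A A = 1 := by rw [dot_self_norm', hE p hp]; norm_num
  have hB1 : dot B B = 1 := by rw [dot_self_norm', hG p hp]; norm_num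
  have hAB : dot A B = c := (hcos p hp).symm
  have hsin : 0 < Real.sin (θ p) :=
    Real.sin_pos_of_pos_of_lt_pi (hθr p hp).1 (hθr p hp).2
  have hc2 : Real.sin (θ p) ^ 2 = 1 - c ^ 2 := by
    have := Real.sin_sq_add_cos_sq (θ p); rw [hcdef]; linarith
  have hc2pos : 0 < 1 - c ^ 2 := by rw [← hc2]; positivity
  set nv : E3 := N p with hnvdef
  have hnv : nv = (Real.sin (θ p))⁻¹ • cross3 A B := hNdef p hp
  have hnn : dot nv nv = 1 := by
    rw [hnv, dot_smul_left', dot_smul_right', cross_norm', hA1, hB1, hAB]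
    field_simp
    rw [← hc2]
  have hAn : dot A nv = 0 := by rw [hnv, dot_smul_right', dot_cross_left]; ring
  have hBn : dot B nv = 0 := by rw [hnv, dot_smul_right', dot_cross_right]; ring
  -- the projection L and its right inverse R
  set L : E3 →L[ℝ] ℝ × ℝ := (innerSL ℝ A).prod (innerSL ℝ B) with hLdef
  have hLapp : ∀ v : E3, L v = (dot A v, dot B v) := by
    intro v; simp [hLdef, dot]
  set R : (ℝ × ℝ) →L[ℝ] E3 :=
    (((1-c^2)⁻¹ • (ContinuousLinearMap.fst ℝ ℝ ℝ - c • ContinuousLinearMap.snd ℝ ℝ ℝ)).smulRight A)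
    + (((1-c^2)⁻¹ • (ContinuousLinearMap.snd ℝ ℝ ℝ - c • ContinuousLinearMap.fst ℝ ℝ ℝ)).smulRight B)
    with hRdef
  have hRapp : ∀ w : ℝ × ℝ,
      R w = ((1-c^2)⁻¹ * (w.1 - c * w.2)) • A + ((1-c^2)⁻¹ * (w.2 - c * w.1)) • B := by
    intro w; simp [hRdef, smul_eq_mul]
  -- decomposition of an arbitrary vector
  have hdecomp : ∀ w : E3, w = R (L w) + dot nv w • nv := by
    intro w
    have key : (1 - c^2) • w =
        (dot A w - c * dot B w) • A + (dot B w - c * dot A w) • B +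
        dot w (cross3 A B) • cross3 A B := by
      have := gram_decomp A B w
      rw [hA1, hB1, hAB] at this
      simpa using this
    have hns : dot nv w • nv = ((1-c^2)⁻¹ * dot w (cross3 A B)) • cross3 A B := by
      rw [hnv, dot_smul_left', smul_smul]
      congr 1
      rw [dot_comm' (cross3 A B) w, ← hc2, sq, mul_inv]
      ring
    have hRL : R (L w) = ((1-c^2)⁻¹ * (dot A w - c * dot B w)) • A
        + ((1-c^2)⁻¹ * (dot B w - c * dot A w)) • B := by
      rw [hLapp, hRapp]
    have key2 : w = (1-c^2)⁻¹ • ((dot A w - c * dot B w) • A + (dot B w - c * dot A w) • B +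
        dot w (cross3 A B) • cross3 A B) := by
      rw [← key, smul_smul, inv_mul_cancel₀ hc2pos.ne', one_smul]
    rw [hRL, hns]
    conv_lhs => rw [key2]
    simp only [smul_add, smul_smul]
  -- Sinv and its derivative at p
  set Sinv : ℝ × ℝ → ℝ × ℝ := fun q => L (f q) with hSinvdef
  have hSinvD : ContDiffOn ℝ 1 Sinv D := L.contDiff.comp_contDiffOn hf.1
  set M : (ℝ × ℝ) ≃L[ℝ] (ℝ × ℝ) :=
    ContinuousLinearEquiv.equivOfInverse (mk2 1 c c 1)
      (mk2 ((1-c^2)⁻¹) (-(c*(1-c^2)⁻¹)) (-(c*(1-c^2)⁻¹)) ((1-c^2)⁻¹))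
      (by intro w; rw [mk2_apply, mk2_apply]; ext <;> (simp only []; field_simp; ring))
      (by intro w; rw [mk2_apply, mk2_apply]; ext <;> (simp only []; field_simp; ring))
      with hMdef
  have hM : HasFDerivAt Sinv (M : (ℝ × ℝ) →L[ℝ] (ℝ × ℝ)) p := by
    have h1 : HasFDerivAt f (fderiv ℝ f p) p := (hfd p hp).hasFDerivAt
    have h2 : HasFDerivAt Sinv (L.comp (fderiv ℝ f p)) p := L.hasFDerivAt.comp p h1
    have h3 : L.comp (fderiv ℝ f p) = (M : (ℝ × ℝ) →L[ℝ] (ℝ × ℝ)) := by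
      apply ContinuousLinearMap.ext
      intro w
      have := hfderiv p hp w
      rw [ContinuousLinearMap.comp_apply, this, hLapp]
      have hMw : (M : (ℝ × ℝ) →L[ℝ] (ℝ × ℝ)) w = (1 * w.1 + c * w.2, c * w.1 + 1 * w.2) := by
        rw [hMdef]; exact mk2_apply 1 c c 1 w
      rw [hMw, dot_add_right', dot_add_right', dot_smul_right', dot_smul_right',
          dot_smul_right', dot_smul_right', hA1, hAB, dot_comm' B A, hAB, hB1]
      ext <;> simp <;> ring
    rwa [h3] at h2
  have hSc : ContDiffAt ℝ 1 Sinv p := (hSinvD.contDiffAt (hD.mem_nhds hp))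
  set Φ : OpenPartialHomeomorph (ℝ × ℝ) (ℝ × ℝ) := hSc.toOpenPartialHomeomorph Sinv hM one_ne_zero with hΦdef
  have hΦcoe : (Φ : ℝ × ℝ → ℝ × ℝ) = Sinv := rfl
  have hpsource : p ∈ Φ.source := hSc.mem_toOpenPartialHomeomorph_source hM one_ne_zero
  have hsymmC : ContDiffAt ℝ 1 (Φ.symm) (Sinv p) := hSc.to_localInverse hM one_ne_zero
  obtain ⟨t, ht, hts⟩ := hsymmC.contDiffOn le_rfl (by simp)
  obtain ⟨V₁, hV₁t, hV₁open, hpV₁⟩ := mem_nhds_iff.1 ht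
  have hV₁c : ContDiffOn ℝ 1 (Φ.symm) V₁ := hts.mono hV₁t
  -- the neighbourhood U
  have hNdot : ContinuousOn (fun q => dot nv (N q)) D := by
    have : ContinuousOn N D := hN.1.continuousOn
    exact (continuousOn_const.inner this : ContinuousOn (fun q => (inner ℝ nv (N q) : ℝ)) D)
  set U : Set (ℝ × ℝ) :=
    Φ.source ∩ ((D ∩ (fun q => dot nv (N q)) ⁻¹' Ioi (1/2)) ∩ (D ∩ Sinv ⁻¹' V₁)) with hUdef
  have hUopen : IsOpen U := by
    apply Φ.open_source.inter
    exact ((hNdot.isOpen_inter_preimage hD isOpen_Ioi).inter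
      (hSinvD.continuousOn.isOpen_inter_preimage hD hV₁open))
  have hpU : p ∈ U := by
    refine ⟨hpsource, ⟨⟨hp, ?_⟩, ⟨hp, hpV₁⟩⟩⟩
    simpa [← hnvdef, hnn] using (by norm_num : (1:ℝ)/2 < 1)
  have hUD : U ⊆ D := fun q hq => hq.2.1.1
  have hUsource : U ⊆ Φ.source := fun q hq => hq.1
  have hUhalf : ∀ q ∈ U, (1:ℝ)/2 < dot nv (N q) := fun q hq => hq.2.1.2
  have hUV₁ : ∀ q ∈ U, Sinv q ∈ V₁ := fun q hq => hq.2.2.2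
  -- the set V and the map S
  set V : Set (ℝ × ℝ) := Φ.target ∩ Φ.symm ⁻¹' U with hVdef
  have hVopen : IsOpen V := Φ.isOpen_inter_preimage_symm hUopen
  set S : ℝ × ℝ → ℝ × ℝ := ⇑(Φ.symm) with hSdef
  have hSU : ∀ q ∈ V, S q ∈ U := fun q hq => hq.2
  have hSD : ∀ q ∈ V, S q ∈ D := fun q hq => hUD (hSU q hq)
  have hlinv : ∀ q ∈ U, S (Sinv q) = q := by
    intro q hq; exact Φ.left_inv (hUsource hq)
  have hrinv : ∀ q ∈ V, Sinv (S q) = q := by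
    intro q hq; exact Φ.right_inv hq.1
  have hVV₁ : V ⊆ V₁ := by
    intro q hq
    have := hUV₁ _ (hSU q hq)
    rwa [hrinv q hq] at this
  have hSc1 : ContDiffOn ℝ 1 S V := hV₁c.mono hVV₁
  have hSmaps : MapsTo S V D := fun q hq => hSD q hq
  -- the height function φ and the graph map g
  set φ : ℝ × ℝ → ℝ := fun v => dot nv (f (S v)) with hφdef
  set g : ℝ × ℝ → E3 := fun v => R v + φ v • nv with hgdef
  have hfSg : ∀ v ∈ V, f (S v) = g v := by
    intro v hv
    have h1 := hdecomp (f (S v))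
    have h2 : L (f (S v)) = v := hrinv v hv
    rw [h2] at h1
    exact h1
  -- key derivative computation at each point of V
  have hkey : ∀ v ∈ V, DifferentiableAt ℝ (f ∘ S) v ∧
      (∀ w, L (fderiv ℝ (f ∘ S) v w) = w) ∧
      fderiv ℝ φ v = (-(dot (N (S v)) nv)⁻¹) • ((innerSL ℝ (N (S v))).comp R) := by
    intro v hv
    have hSdiff : DifferentiableAt ℝ S v :=
      (hSc1.contDiffAt (hVopen.mem_nhds hv)).differentiableAt one_ne_zero
    have hq : S v ∈ D := hSD v hv
    have hfq : DifferentiableAt ℝ f (S v) := hfd _ hq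
    have hcomp : HasFDerivAt (f ∘ S) ((fderiv ℝ f (S v)).comp (fderiv ℝ S v)) v :=
      (hfq.hasFDerivAt).comp v hSdiff.hasFDerivAt
    set Ψ : (ℝ × ℝ) →L[ℝ] E3 := (fderiv ℝ f (S v)).comp (fderiv ℝ S v) with hΨdef
    have hLid : ∀ w, L (Ψ w) = w := by
      have h1 : HasFDerivAt (fun x => L (f (S x))) (L.comp Ψ) v := L.hasFDerivAt.comp v hcomp
      have h2 : (fun x => L (f (S x))) =ᶠ[nhds v] id := by
        filter_upwards [hVopen.mem_nhds hv] with x hx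
        exact hrinv x hx
      have h3 : HasFDerivAt (fun x => L (f (S x)))
          (ContinuousLinearMap.id ℝ (ℝ × ℝ)) v :=
        (hasFDerivAt_id v).congr_of_eventuallyEq h2
      have h4 : L.comp Ψ = ContinuousLinearMap.id ℝ (ℝ × ℝ) := h1.unique h3
      intro w
      have := congrArg (fun (T : (ℝ × ℝ) →L[ℝ] (ℝ × ℝ)) => T w) h4
      simpa using this
    have hperp : ∀ w, dot (N (S v)) (Ψ w) = 0 := by
      intro w
      have : Ψ w = (fderiv ℝ S v w).1 • pdx f (S v) + (fderiv ℝ S v w).2 • pdy f (S v) := by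
        rw [hΨdef, ContinuousLinearMap.comp_apply, hfderiv _ hq]
      rw [this, dot_add_right', dot_smul_right', dot_smul_right', hNfx _ hq, hNfy _ hq]
      ring
    have hΨdec : ∀ w, Ψ w = R w + dot nv (Ψ w) • nv := by
      intro w
      have := hdecomp (Ψ w)
      rwa [hLid w] at this
    have hdns : dot (N (S v)) nv ≠ 0 := by
      have := hUhalf _ (hSU v hv)
      rw [dot_comm'] at this; linarith
    have hval : ∀ w, dot nv (Ψ w) = -(dot (N (S v)) nv)⁻¹ * dot (N (S v)) (R w) := by
      intro w
      have h0 := hperp w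
      conv_lhs at h0 => rw [hΨdec w]
      rw [dot_add_right', dot_smul_right'] at h0
      field_simp
      linarith
    refine ⟨hcomp.differentiableAt, fun w => by rw [hcomp.fderiv]; exact hLid w, ?_⟩
    have hφ' : HasFDerivAt φ ((innerSL ℝ nv).comp Ψ) v := by
      have : HasFDerivAt (fun w : E3 => (inner ℝ nv w : ℝ)) (innerSL ℝ nv) (f (S v)) :=
        (innerSL ℝ nv).hasFDerivAt
      exact this.comp v hcomp
    have heq : (innerSL ℝ nv).comp Ψ
        = (-(dot (N (S v)) nv)⁻¹) • ((innerSL ℝ (N (S v))).comp R) := by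
      apply ContinuousLinearMap.ext
      intro w
      have := hval w
      simp only [ContinuousLinearMap.comp_apply, ContinuousLinearMap.smul_apply,
        innerSL_apply_apply, smul_eq_mul]
      rw [show (inner ℝ nv (Ψ w) : ℝ) = dot nv (Ψ w) from rfl,
        show (inner ℝ (N (S v)) (R w) : ℝ) = dot (N (S v)) (R w) from rfl, this]
    rw [heq] at hφ'
    exact hφ'.fderiv
  -- φ is C² on V
  have hNS : ContDiffOn ℝ 1 (fun v => N (S v)) V := hN.1.comp hSc1 hSmaps
  have hGc : ContDiffOn ℝ 1
      (fun v => (-(dot (N (S v)) nv)⁻¹) • ((innerSL ℝ (N (S v))).comp R)) V := by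
    have hd : ContDiffOn ℝ 1 (fun v => dot (N (S v)) nv) V :=
      (hNS.inner ℝ contDiffOn_const : ContDiffOn ℝ 1 (fun v => (inner ℝ (N (S v)) nv : ℝ)) V)
    have hdne : ∀ v ∈ V, dot (N (S v)) nv ≠ 0 := by
      intro v hv
      have := hUhalf _ (hSU v hv)
      rw [dot_comm'] at this; linarith
    have hscal : ContDiffOn ℝ 1 (fun v => -(dot (N (S v)) nv)⁻¹) V := (hd.inv hdne).neg
    have hclm : ContDiffOn ℝ 1 (fun v => (innerSL ℝ (N (S v))).comp R) V := by
      have h1 : ContDiff ℝ 1 (fun z : E3 => (innerSL ℝ z).comp R) := by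
        have : (fun z : E3 => (innerSL ℝ z).comp R)
            = fun z => ((ContinuousLinearMap.compL ℝ (ℝ × ℝ) E3 ℝ).flip R) (innerSL ℝ z) := by
          funext z; rfl
        rw [this]
        exact (((ContinuousLinearMap.compL ℝ (ℝ × ℝ) E3 ℝ).flip R).contDiff).comp
          (innerSL ℝ).contDiff
      exact h1.comp_contDiffOn hNS
    exact hscal.smul hclm
  have hφdiff : ∀ v ∈ V, DifferentiableAt ℝ φ v := by
    intro v hv
    have hSdiff : DifferentiableAt ℝ S v :=
      (hSc1.contDiffAt (hVopen.mem_nhds hv)).differentiableAt one_ne_zero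
    have hfq : DifferentiableAt ℝ f (S v) := hfd _ (hSD v hv)
    exact ((innerSL ℝ nv).differentiableAt).comp v (hfq.comp v hSdiff)
  have hφ2 : ContDiffOn ℝ 2 φ V := by
    rw [show ((2:WithTop ℕ∞)) = (1 : WithTop ℕ∞) + 1 from rfl,
      contDiffOn_succ_iff_fderiv_of_isOpen hVopen]
    refine ⟨fun v hv => (hφdiff v hv).differentiableWithinAt, by simp, ?_⟩
    exact hGc.congr (fun v hv => (hkey v hv).2.2)
  have hg2 : ContDiffOn ℝ 2 g V := by
    apply ContDiffOn.add
    · exact R.contDiff.contDiffOn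
    · exact hφ2.smul contDiffOn_const
  have hfS2 : ContDiffOn ℝ 2 (f ∘ S) V := hg2.congr (fun v hv => hfSg v hv)
  -- the final package
  refine ⟨U, V, S, Sinv, hUopen, hpU, hUD, hVopen, ⟨hSU, ?_, ?_⟩, hSc1, hSinvD.mono hUD,
    hrinv, hlinv, hfS2, ?_⟩
  · -- InjOn
    intro a ha b hb hab
    have := congrArg Sinv hab
    rwa [hrinv a ha, hrinv b hb] at this
  · -- SurjOn
    intro q hq
    refine ⟨Sinv q, ⟨Φ.map_source (hUsource hq), ?_⟩, hlinv q hq⟩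
    show S (Sinv q) ∈ U
    rw [hlinv q hq]; exact hq
  · -- linear independence
    intro v hv
    have hdiff : DifferentiableAt ℝ (f ∘ S) v := (hkey v hv).1
    have hLD := (hkey v hv).2.1
    have hx : pdx (f ∘ S) v = fderiv ℝ (f ∘ S) v ((1:ℝ),(0:ℝ)) := hdiff.lineDeriv_eq_fderiv
    have hy : pdy (f ∘ S) v = fderiv ℝ (f ∘ S) v ((0:ℝ),(1:ℝ)) := hdiff.lineDeriv_eq_fderiv
    apply LinearIndependent.of_comp (L.toLinearMap)
    have hfun : (L.toLinearMap ∘ ![pdx (f ∘ S) v, pdy (f ∘ S) v])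
        = ![((1:ℝ),(0:ℝ)), ((0:ℝ),(1:ℝ))] := by
      funext i
      fin_cases i
      · show L (pdx (f ∘ S) v) = ((1:ℝ),(0:ℝ))
        rw [hx]; exact hLD _
      · show L (pdy (f ∘ S) v) = ((0:ℝ),(1:ℝ))
        rw [hy]; exact hLD _
    rw [hfun]
    rw [linearIndependent_fin2]
    constructor
    · intro h
      have := congrArg Prod.snd h
      simpa using this
    · intro a h
      have := congrArg Prod.fst h
      simpa using this


end
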